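/- Let L be a Lie algebra over a field K with basis (v_i)_{i∈I}, and let S(L) be its symmetric algebra with its Poisson bracket. Then {a,{b,c}} = 0 for all a,b,c ∈ S(L) if and only if L is abelian. -/

import Mathlib

open MvPolynomial

/-- Shestakov: for a Lie algebra `L` with basis `(v_i)` over a field `K`, identify the
symmetric algebra `S(L)` with the polynomial algebra `K[X_i]`, let `θ : L → S(L)` be the
linear map with `θ(v_i) = X_i`, and let `{·,·}` be the Poisson bracket, i.e. the unique
bilinear, alternating map satisfying the Leibniz rule with `{X_i, X_j} = θ([v_i, v_j])`.
Then `{a, {b, c}} = 0` for all `a, b, c ∈ S(L)` iff `L` is abelian. -/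
theorem symmetricAlgebra_metabelian_iff_abelian
    {K L I : Type*} [Field K] [LieRing L] [LieAlgebra K L] (B : Module.Basis I K L)
    (P : MvPolynomial I K →ₗ[K] MvPolynomial I K →ₗ[K] MvPolynomial I K)
    (halt : ∀ f, P f f = 0)
    (hanti : ∀ f g, P f g = - P g f)
    (hjac : ∀ f g h, P f (P g h) = P (P f g) h + P g (P f h))
    (hleib : ∀ f g h, P (f * g) h = f * P g h + g * P f h)
    (hX : ∀ i j, P (X i) (X j) = B.constr K (fun i => (X i : MvPolynomial I K)) ⁅B i, B j⁆) :
    (∀ a b c : MvPolynomial I K, P a (P b c) = 0) ↔ IsLieAbelian L := by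
  constructor
  · intro h
    -- Step 1: each bracket of basis vectors maps to 0 under θ
    have hbrac : ∀ i j : I, ⁅B i, B j⁆ = 0 := by
      intro i j
      set c : MvPolynomial I K := P (X i) (X j) with hc
      have h1 : P (X i * X j) (X j) = X j * c := by
        rw [hleib, halt, mul_zero, zero_add, ← hc]
      have h2 : P (X i) (X j * c) = 0 := by
        rw [← h1]; exact h _ _ _
      have h3 : P (X i) c = 0 := h _ _ _
      have h4 : P (X j * c) (X i) = X j * P c (X i) + c * P (X j) (X i) := hleib _ _ _
      have h5 : P c (X i) = 0 := by rw [hanti, h3, neg_zero]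
      have h6 : P (X j) (X i) = -c := by rw [hanti, ← hc]
      have hcc : c * c = 0 := by
        have e : P (X i) (X j * c) = c * c := by
          rw [hanti, h4, h5, h6, mul_zero, zero_add, mul_neg, neg_neg]
        rw [h2] at e
        exact e.symm
      have hc0 : c = 0 := by
        exact mul_self_eq_zero.mp hcc
      -- θ is injective
      have hθ : B.constr K (fun i => (X i : MvPolynomial I K)) ⁅B i, B j⁆ = 0 := by
        rw [← hX, ← hc, hc0]
      have hrepr : B.repr ⁅B i, B j⁆ = 0 := by
        rw [Module.Basis.constr_apply] at hθ
        have := linearIndependent_iff.mp (linearIndependent_X I K) (B.repr ⁅B i, B j⁆)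
        apply this
        rwa [Finsupp.linearCombination_apply]
      have := congrArg B.repr.symm hrepr
      simpa using this
    -- Step 2: conclude abelian
    have had : ∀ x y : L, ⁅x, y⁆ = 0 := by
      letI : LieRing (Module.End K L) := LieRing.ofAssociativeRing
      have hlin : (LieAlgebra.ad K L).toLinearMap = 0 :=
        B.ext fun i => B.ext fun j => by simp [hbrac i j]
      intro x y
      have : LieAlgebra.ad K L x = 0 := by
        have := congrFun (congrArg DFunLike.coe hlin) x
        simpa using this
      have := congrFun (congrArg DFunLike.coe this) y
      simpa [LieAlgebra.ad_apply] using this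
    exact ⟨had⟩
  · intro habel
    have h1 : ∀ g, P 1 g = 0 := by
      intro g
      have h := hleib 1 1 g
      simp only [one_mul] at h
      exact (left_eq_add.mp h)
    have hC : ∀ (a : K) (g : MvPolynomial I K), P (C a) g = 0 := by
      intro a g
      have hca : (C a : MvPolynomial I K) = a • 1 := by
        rw [smul_eq_C_mul, mul_one]
      rw [hca, map_smul, LinearMap.smul_apply, h1, smul_zero]
    have hXg : ∀ (i : I) (g : MvPolynomial I K), P (X i) g = 0 := by
      intro i g
      induction g using MvPolynomial.induction_on with
      | C a => rw [hanti, hC, neg_zero]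
      | add p q hp hq => rw [map_add, hp, hq, add_zero]
      | mul_X p j hp =>
        rw [hanti, hleib]
        have hji : P (X j) (X i) = 0 := by
          rw [hX, trivial_lie_zero, map_zero]
        have hpi : P p (X i) = 0 := by rw [hanti, hp, neg_zero]
        rw [hji, hpi, mul_zero, mul_zero, add_zero, neg_zero]
    have hP0 : ∀ (f g : MvPolynomial I K), P f g = 0 := by
      intro f g
      induction f using MvPolynomial.induction_on with
      | C a => exact hC a g
      | add p q hp hq => rw [map_add, LinearMap.add_apply, hp, hq, add_zero]
      | mul_X p j hp => rw [hleib, hXg, hp, mul_zero, mul_zero, add_zero]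
    intro a b c
    rw [hP0 b c, map_zero]
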